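/- arXiv:1905.11769 — 6 statements merged into one kernel-verified Lean document; each statement's English description precedes it below -/
import Mathlib

section
/- Let X = [x^1,…,x^n] ∈ ℝ^{d×n} be a feature matrix and let 𝓕 = {F_1,…,F_K} be a K-partition of [d] with d_k := |F_k|. For each k let P_k ∈ ℝ^{d_k×n} be the submatrix of rows of X indexed by F_k, let μ^k ∈ ℝ^n be arbitrary (cluster centroid) vectors, and define the Euclidean clustering error err_k := ‖P_k − 1_{d_k}(μ^k)^⊤‖_F. Let each data point i have a label y^i, and let ℓ be a loss function such that for every label y, the map t ↦ ℓ(t; y) is L-Lipschitz on ℝ. Then for every linear model w ∈ ℝ^d there exists a model w̃ ∈ ℝ^K such that for all subsets S ⊆ [n]: sqrt( Σ_{i∈S} ( ℓ(w^⊤x^i; y^i) − ℓ(w̃^⊤x̃^i; y^i) )² ) ≤ L · Σ_{k=1}^K ‖w_{F_k}^⊥‖_2 · err_k. -/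
open Finset

/-- Theorem: DEFRAG-X preserves linear models.
`X = [x^1,…,x^n] ∈ ℝ^{d×n}`, `𝓕 = {F_1,…,F_K}` a `K`-partition of `[d]`,
`P_k` the rows of `X` indexed by `F_k`, centroids `μ^k ∈ ℝ^n`, and Euclidean
clustering error `err_k = ‖P_k - 1_{d_k}(μ^k)^⊤‖_F`.  For a loss `ℓ` that is
`L`-Lipschitz in its first argument, for every `w ∈ ℝ^d` there is `wt ∈ ℝ^K`
such that for every `S ⊆ [n]`:
`sqrt(∑_{i∈S} (ℓ(w^⊤x^i;y^i) - ℓ(wt^⊤x̃^i;y^i))²) ≤ L·∑_k ‖w_{F_k}^⊥‖₂·err_k`. -/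
theorem stmt_1 {d n K : ℕ} {α : Type*}
    (X : Matrix (Fin d) (Fin n) ℝ)
    (F : Fin K → Finset (Fin d))
    (hdisj : ∀ k l : Fin K, k ≠ l → Disjoint (F k) (F l))
    (hcover : ∀ j : Fin d, ∃ k : Fin K, j ∈ F k)
    (μ : Fin K → Fin n → ℝ)
    (y : Fin n → α)
    (f : ℝ → α → ℝ) (L : ℝ)
    (hLip : ∀ (a : α) (s t : ℝ), |f s a - f t a| ≤ L * |s - t|)
    (w : Fin d → ℝ) :
    ∃ wt : Fin K → ℝ, ∀ S : Finset (Fin n),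
      Real.sqrt (∑ i ∈ S,
          (f (∑ j : Fin d, w j * X j i) (y i) -
            f (∑ k : Fin K, wt k * ∑ j ∈ F k, X j i) (y i)) ^ 2) ≤
        L * ∑ k : Fin K,
          Real.sqrt (∑ j ∈ F k, (w j - (∑ j' ∈ F k, w j') / ((F k).card : ℝ)) ^ 2) *
            Real.sqrt (∑ j ∈ F k, ∑ i : Fin n, (X j i - μ k i) ^ 2) := by
  classical
  obtain ⟨m, hm⟩ : ∃ m : Fin K → ℝ,
      m = fun k => (∑ j ∈ F k, w j) / ((F k).card : ℝ) := ⟨_, rfl⟩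
  refine ⟨m, fun S => ?_⟩
  rcases Nat.eq_zero_or_pos n with hn | hn
  · subst hn
    have hS : S = ∅ := Finset.eq_empty_of_isEmpty S
    simp [hS]
  have a0 : α := y ⟨0, hn⟩
  have hL : 0 ≤ L := by
    have h := hLip a0 0 1
    have h0 : (0:ℝ) ≤ |f 0 a0 - f 1 a0| := abs_nonneg _
    simpa using h0.trans h
  -- key algebraic identity
  have hmw : ∀ k, m k * ((F k).card : ℝ) = ∑ j ∈ F k, w j := by
    intro k
    rcases eq_or_ne ((F k).card) 0 with h | h
    · have hFk : F k = ∅ := Finset.card_eq_zero.mp h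
      simp [hm, hFk]
    · have h' : ((F k).card : ℝ) ≠ 0 := Nat.cast_ne_zero.mpr h
      simp only [hm]
      exact div_mul_cancel₀ _ h'
  have key : ∀ i, (∑ j : Fin d, w j * X j i) - (∑ k, m k * ∑ j ∈ F k, X j i)
      = ∑ k, ∑ j ∈ F k, (w j - m k) * (X j i - μ k i) := by
    intro i
    have huniv : (Finset.univ : Finset (Fin d)) = Finset.univ.biUnion F := by
      ext j
      simp only [Finset.mem_univ, Finset.mem_biUnion, true_iff]
      obtain ⟨k, hk⟩ := hcover j
      exact ⟨k, trivial, hk⟩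
    have hsplit : ∑ j : Fin d, w j * X j i = ∑ k, ∑ j ∈ F k, w j * X j i := by
      rw [huniv, Finset.sum_biUnion]
      intro k _ l _ hkl
      exact hdisj k l hkl
    rw [hsplit, ← Finset.sum_sub_distrib]
    refine Finset.sum_congr rfl fun k _ => ?_
    have e1 : ∀ j ∈ F k, (w j - m k) * (X j i - μ k i)
        = (w j * X j i - m k * X j i) - (μ k i * w j - μ k i * m k) :=
      fun j _ => by ring
    rw [Finset.sum_congr rfl e1, Finset.sum_sub_distrib, Finset.sum_sub_distrib,
      Finset.sum_sub_distrib, ← Finset.mul_sum, ← Finset.mul_sum, ← Finset.mul_sum,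
      Finset.sum_const, nsmul_eq_mul]
    linear_combination (-(μ k i)) * hmw k
  -- the deviation vectors
  set v : Fin K → EuclideanSpace ℝ (Fin n) := fun k => WithLp.toLp 2 (fun i =>
    if i ∈ S then ∑ j ∈ F k, (w j - m k) * (X j i - μ k i) else 0) with hv
  have hvsum : ∀ i ∈ S, (∑ k, v k) i
      = (∑ j : Fin d, w j * X j i) - (∑ k, m k * ∑ j ∈ F k, X j i) := by
    intro i hi
    rw [key i, WithLp.ofLp_sum, Finset.sum_apply]
    refine Finset.sum_congr rfl fun k _ => ?_
    simp [hv, hi]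
  -- step 1: Lipschitz bound
  have step1 : Real.sqrt (∑ i ∈ S,
      (f (∑ j : Fin d, w j * X j i) (y i) -
        f (∑ k : Fin K, m k * ∑ j ∈ F k, X j i) (y i)) ^ 2)
      ≤ L * ‖∑ k, v k‖ := by
    have hnorm : ‖∑ k, v k‖ = Real.sqrt (∑ i : Fin n, ((∑ k, v k) i) ^ 2) := by
      rw [EuclideanSpace.norm_eq]
      congr 1
      refine Finset.sum_congr rfl fun i _ => ?_
      rw [Real.norm_eq_abs, sq_abs]
    have hsum : ∑ i : Fin n, ((∑ k, v k) i) ^ 2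
        = ∑ i ∈ S, ((∑ j : Fin d, w j * X j i) - (∑ k, m k * ∑ j ∈ F k, X j i)) ^ 2 := by
      rw [← Finset.sum_filter_add_sum_filter_not Finset.univ (· ∈ S)]
      have h1 : ∑ i ∈ Finset.univ.filter (· ∈ S), ((∑ k, v k) i) ^ 2
          = ∑ i ∈ S, ((∑ j : Fin d, w j * X j i) - (∑ k, m k * ∑ j ∈ F k, X j i)) ^ 2 := by
        rw [Finset.filter_mem_eq_inter, Finset.univ_inter]
        exact Finset.sum_congr rfl fun i hi => by rw [hvsum i hi]
      have h2 : ∑ i ∈ Finset.univ.filter (¬ · ∈ S), ((∑ k, v k) i) ^ 2 = 0 := by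
        refine Finset.sum_eq_zero fun i hi => ?_
        have hi' : i ∉ S := (Finset.mem_filter.mp hi).2
        have : (∑ k, v k) i = 0 := by
          rw [WithLp.ofLp_sum, Finset.sum_apply]
          refine Finset.sum_eq_zero fun k _ => ?_
          simp [hv, hi']
        simp [this]
      rw [h1, h2, add_zero]
    rw [hnorm, hsum, ← Real.sqrt_sq hL, ← Real.sqrt_mul (sq_nonneg L), Finset.mul_sum]
    apply Real.sqrt_le_sqrt
    refine Finset.sum_le_sum fun i _ => ?_
    have h := hLip (y i) (∑ j : Fin d, w j * X j i) (∑ k : Fin K, m k * ∑ j ∈ F k, X j i)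
    calc (f (∑ j : Fin d, w j * X j i) (y i) -
          f (∑ k : Fin K, m k * ∑ j ∈ F k, X j i) (y i)) ^ 2
        = |f (∑ j : Fin d, w j * X j i) (y i) -
          f (∑ k : Fin K, m k * ∑ j ∈ F k, X j i) (y i)| ^ 2 := (sq_abs _).symm
      _ ≤ (L * |(∑ j : Fin d, w j * X j i) - (∑ k : Fin K, m k * ∑ j ∈ F k, X j i)|) ^ 2 := by
          apply pow_le_pow_left₀ (abs_nonneg _) h
      _ = L ^ 2 * ((∑ j : Fin d, w j * X j i) - (∑ k : Fin K, m k * ∑ j ∈ F k, X j i)) ^ 2 := by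
          rw [mul_pow, sq_abs]
  -- step 2: per-cluster bound
  have step2 : ∀ k, ‖v k‖ ≤
      Real.sqrt (∑ j ∈ F k, (w j - (∑ j' ∈ F k, w j') / ((F k).card : ℝ)) ^ 2) *
        Real.sqrt (∑ j ∈ F k, ∑ i : Fin n, (X j i - μ k i) ^ 2) := by
    intro k
    have hnorm : ‖v k‖ = Real.sqrt (∑ i : Fin n, (v k i) ^ 2) := by
      rw [EuclideanSpace.norm_eq]
      congr 1
      refine Finset.sum_congr rfl fun i _ => ?_
      rw [Real.norm_eq_abs, sq_abs]
    rw [hnorm, ← Real.sqrt_mul (by positivity)]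
    apply Real.sqrt_le_sqrt
    have hpt : ∀ i : Fin n, (v k i) ^ 2 ≤
        (∑ j ∈ F k, (w j - m k) ^ 2) * (∑ j ∈ F k, (X j i - μ k i) ^ 2) := by
      intro i
      by_cases hi : i ∈ S
      · have := Finset.sum_mul_sq_le_sq_mul_sq (F k) (fun j => w j - m k)
          (fun j => X j i - μ k i)
        simpa [hv, hi] using this
      · have : v k i = 0 := by simp [hv, hi]
        rw [this]
        have h0 : (0:ℝ) ≤ (∑ j ∈ F k, (w j - m k) ^ 2) * (∑ j ∈ F k, (X j i - μ k i) ^ 2) :=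
          mul_nonneg (Finset.sum_nonneg fun j _ => sq_nonneg _)
            (Finset.sum_nonneg fun j _ => sq_nonneg _)
        simpa using h0
    calc ∑ i : Fin n, (v k i) ^ 2
        ≤ ∑ i : Fin n, (∑ j ∈ F k, (w j - m k) ^ 2) * (∑ j ∈ F k, (X j i - μ k i) ^ 2) :=
          Finset.sum_le_sum fun i _ => hpt i
      _ = (∑ j ∈ F k, (w j - m k) ^ 2) * ∑ i : Fin n, ∑ j ∈ F k, (X j i - μ k i) ^ 2 := by
          rw [Finset.mul_sum]
      _ = (∑ j ∈ F k, (w j - (∑ j' ∈ F k, w j') / ((F k).card : ℝ)) ^ 2) *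
          ∑ j ∈ F k, ∑ i : Fin n, (X j i - μ k i) ^ 2 := by
          rw [hm]
          rw [Finset.sum_comm]
  -- combine
  calc Real.sqrt (∑ i ∈ S,
      (f (∑ j : Fin d, w j * X j i) (y i) -
        f (∑ k : Fin K, m k * ∑ j ∈ F k, X j i) (y i)) ^ 2)
      ≤ L * ‖∑ k, v k‖ := step1
    _ ≤ L * ∑ k, ‖v k‖ := by
        apply mul_le_mul_of_nonneg_left (norm_sum_le _ _) hL
    _ ≤ L * ∑ k : Fin K,
        Real.sqrt (∑ j ∈ F k, (w j - (∑ j' ∈ F k, w j') / ((F k).card : ℝ)) ^ 2) *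
          Real.sqrt (∑ j ∈ F k, ∑ i : Fin n, (X j i - μ k i) ^ 2) := by
        apply mul_le_mul_of_nonneg_left (Finset.sum_le_sum fun k _ => step2 k) hL
end

section
/- Under the hypotheses of the previous theorem (feature matrix X = [x^1,…,x^n] ∈ ℝ^{d×n}, K-partition 𝓕 = {F_1,…,F_K} of [d] with row-submatrices P_k and centroids μ^k, clustering errors err_k := ‖P_k − 1_{d_k}(μ^k)^⊤‖_F, and a loss ℓ that is L-Lipschitz in its first argument for every label y), for every w ∈ ℝ^d, setting w_0 := max_{k∈[K]} ‖w_{F_k}^⊥‖_2, there exists w̃ ∈ ℝ^K such that for all S ⊆ [n]: sqrt( Σ_{i∈S} ( ℓ(w^⊤x^i; y^i) − ℓ(w̃^⊤x̃^i; y^i) )² ) ≤ L · w_0 · Σ_{k=1}^K err_k. -/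
open Finset

theorem tri_aux {n K : ℕ} (g : Fin K → Fin n → ℝ) :
    Real.sqrt (∑ i, (∑ k, g k i)^2) ≤ ∑ k, Real.sqrt (∑ i, (g k i)^2) := by
  have h := norm_sum_le (E := EuclideanSpace ℝ (Fin n)) Finset.univ (fun k => (WithLp.toLp 2 (g k) : EuclideanSpace ℝ (Fin n)))
  simp only [EuclideanSpace.norm_eq, Real.norm_eq_abs, sq_abs] at h
  convert h using 3
  simp

/-- Simplified DEFRAG-X guarantee.
Under the hypotheses of Statement 1, with `w₀ := max_k ‖w_{F_k}^⊥‖₂`, there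
exists `wt ∈ ℝ^K` such that for all `S ⊆ [n]`:
`sqrt(∑_{i∈S} (ℓ(w^⊤x^i;y^i) - ℓ(wt^⊤x̃^i;y^i))²) ≤ L · w₀ · ∑_k err_k`. -/
theorem stmt_2 {d n K : ℕ} {α : Type*} (hK : 0 < K)
    (X : Matrix (Fin d) (Fin n) ℝ)
    (F : Fin K → Finset (Fin d))
    (hdisj : ∀ k l : Fin K, k ≠ l → Disjoint (F k) (F l))
    (hcover : ∀ j : Fin d, ∃ k : Fin K, j ∈ F k)
    (μ : Fin K → Fin n → ℝ)
    (y : Fin n → α)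
    (f : ℝ → α → ℝ) (L : ℝ)
    (hLip : ∀ (a : α) (s t : ℝ), |f s a - f t a| ≤ L * |s - t|)
    (w : Fin d → ℝ) :
    ∃ wt : Fin K → ℝ, ∀ S : Finset (Fin n),
      Real.sqrt (∑ i ∈ S,
          (f (∑ j : Fin d, w j * X j i) (y i) -
            f (∑ k : Fin K, wt k * ∑ j ∈ F k, X j i) (y i)) ^ 2) ≤
        L *
          (Finset.univ.sup' ⟨⟨0, hK⟩, Finset.mem_univ _⟩ fun k : Fin K =>
            Real.sqrt (∑ j ∈ F k, (w j - (∑ j' ∈ F k, w j') / ((F k).card : ℝ)) ^ 2)) *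
          ∑ k : Fin K, Real.sqrt (∑ j ∈ F k, ∑ i : Fin n, (X j i - μ k i) ^ 2) := by
  classical
  set m : Fin K → ℝ := fun k => (∑ j' ∈ F k, w j') / ((F k).card : ℝ) with hm
  refine ⟨m, fun S => ?_⟩
  rcases Nat.eq_zero_or_pos n with hn | hn
  · subst hn
    have hS : S = ∅ := Finset.eq_empty_of_isEmpty S
    simp [hS]
  have hL : 0 ≤ L := by
    have h := hLip (y ⟨0, hn⟩) 0 1
    simp at h
    exact le_trans (abs_nonneg _) h
  -- abbreviations
  set a : Fin K → ℝ := fun k => Real.sqrt (∑ j ∈ F k, (w j - m k) ^ 2) with ha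
  set err : Fin K → ℝ := fun k => Real.sqrt (∑ j ∈ F k, ∑ i : Fin n, (X j i - μ k i) ^ 2) with herr
  set w0 : ℝ := Finset.univ.sup' ⟨⟨0, hK⟩, Finset.mem_univ _⟩ a with hw0
  -- partition identity
  have huniv : Finset.univ.biUnion F = Finset.univ := by
    ext j; simp only [Finset.mem_biUnion, Finset.mem_univ, true_and, iff_true]
    exact hcover j
  have hsum : ∀ g : Fin d → ℝ, ∑ j, g j = ∑ k, ∑ j ∈ F k, g j := by
    intro g
    rw [← huniv, Finset.sum_biUnion]
    intro k _ l _ hkl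
    exact hdisj k l hkl
  -- zero-sum property of centered weights
  have hz : ∀ k, ∑ j ∈ F k, (w j - m k) = 0 := by
    intro k
    rcases (F k).eq_empty_or_nonempty with h | h
    · simp [h]
    · have hc : ((F k).card : ℝ) ≠ 0 := Nat.cast_ne_zero.mpr (Finset.card_ne_zero.mpr h)
      rw [Finset.sum_sub_distrib, Finset.sum_const, nsmul_eq_mul, hm]
      field_simp
      ring
  -- the per-cluster error vectors
  set g : Fin K → Fin n → ℝ := fun k i => ∑ j ∈ F k, (w j - m k) * (X j i - μ k i) with hg
  have hdiff : ∀ i, (∑ j, w j * X j i) - (∑ k, m k * ∑ j ∈ F k, X j i) = ∑ k, g k i := by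
    intro i
    rw [hsum (fun j => w j * X j i), ← Finset.sum_sub_distrib]
    refine Finset.sum_congr rfl fun k _ => ?_
    have hz' : ∑ j ∈ F k, (w j - m k) * μ k i = 0 := by
      rw [← Finset.sum_mul, hz, zero_mul]
    have : g k i = ∑ j ∈ F k, (w j - m k) * X j i := by
      simp only [hg, mul_sub]
      rw [Finset.sum_sub_distrib, hz', sub_zero]
    rw [this]
    simp only [sub_mul, Finset.mul_sum, ← Finset.sum_sub_distrib]
  -- Lipschitz bound termwise
  have h1 : ∑ i ∈ S, (f (∑ j, w j * X j i) (y i) - f (∑ k, m k * ∑ j ∈ F k, X j i) (y i)) ^ 2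
      ≤ L ^ 2 * ∑ i ∈ S, (∑ k, g k i) ^ 2 := by
    rw [Finset.mul_sum]
    refine Finset.sum_le_sum fun i _ => ?_
    have h := hLip (y i) (∑ j, w j * X j i) (∑ k, m k * ∑ j ∈ F k, X j i)
    calc (f (∑ j, w j * X j i) (y i) - f (∑ k, m k * ∑ j ∈ F k, X j i) (y i)) ^ 2
        = |f (∑ j, w j * X j i) (y i) - f (∑ k, m k * ∑ j ∈ F k, X j i) (y i)| ^ 2 := (sq_abs _).symm
      _ ≤ (L * |(∑ j, w j * X j i) - (∑ k, m k * ∑ j ∈ F k, X j i)|) ^ 2 :=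
          pow_le_pow_left₀ (abs_nonneg _) h 2
      _ = L ^ 2 * ((∑ j, w j * X j i) - (∑ k, m k * ∑ j ∈ F k, X j i)) ^ 2 := by
          rw [mul_pow, sq_abs]
      _ = L ^ 2 * (∑ k, g k i) ^ 2 := by rw [hdiff i]
  -- extend to whole index set
  have h2 : ∑ i ∈ S, (∑ k, g k i) ^ 2 ≤ ∑ i : Fin n, (∑ k, g k i) ^ 2 :=
    Finset.sum_le_sum_of_subset_of_nonneg (Finset.subset_univ S)
      (fun i _ _ => sq_nonneg _)
  -- per-cluster Cauchy-Schwarz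
  have h3 : ∀ k, Real.sqrt (∑ i, (g k i) ^ 2) ≤ a k * err k := by
    intro k
    have hcs : ∑ i : Fin n, (g k i) ^ 2
        ≤ (∑ j ∈ F k, (w j - m k) ^ 2) * ∑ j ∈ F k, ∑ i : Fin n, (X j i - μ k i) ^ 2 := by
      rw [Finset.sum_comm (t := Finset.univ), Finset.mul_sum]
      refine Finset.sum_le_sum fun i _ => ?_
      exact Finset.sum_mul_sq_le_sq_mul_sq (F k) _ _
    calc Real.sqrt (∑ i, (g k i) ^ 2)
        ≤ Real.sqrt ((∑ j ∈ F k, (w j - m k) ^ 2) * ∑ j ∈ F k, ∑ i : Fin n, (X j i - μ k i) ^ 2) :=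
          Real.sqrt_le_sqrt hcs
      _ = a k * err k := Real.sqrt_mul (Finset.sum_nonneg fun _ _ => sq_nonneg _) _
  -- combine
  have h4 : Real.sqrt (∑ i : Fin n, (∑ k, g k i) ^ 2) ≤ ∑ k, a k * err k :=
    (tri_aux g).trans (Finset.sum_le_sum fun k _ => h3 k)
  have h5 : ∑ k, a k * err k ≤ w0 * ∑ k, err k := by
    rw [Finset.mul_sum]
    refine Finset.sum_le_sum fun k _ => ?_
    exact mul_le_mul_of_nonneg_right (Finset.le_sup' a (Finset.mem_univ k)) (Real.sqrt_nonneg _)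
  calc Real.sqrt (∑ i ∈ S,
          (f (∑ j, w j * X j i) (y i) - f (∑ k, m k * ∑ j ∈ F k, X j i) (y i)) ^ 2)
      ≤ Real.sqrt (L ^ 2 * ∑ i ∈ S, (∑ k, g k i) ^ 2) := Real.sqrt_le_sqrt h1
    _ ≤ Real.sqrt (L ^ 2 * ∑ i : Fin n, (∑ k, g k i) ^ 2) :=
        Real.sqrt_le_sqrt (mul_le_mul_of_nonneg_left h2 (sq_nonneg _))
    _ = L * Real.sqrt (∑ i : Fin n, (∑ k, g k i) ^ 2) := by
        rw [Real.sqrt_mul (sq_nonneg _), Real.sqrt_sq hL]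
    _ ≤ L * (w0 * ∑ k, err k) :=
        mul_le_mul_of_nonneg_left (h4.trans h5) hL
    _ = L * w0 * ∑ k, err k := by ring
end

section
/- Let v^1,…,v^m ∈ ℝ_+^p be vectors with nonnegative coordinates, each with at least one strictly positive coordinate. For each i let I(v^i) := ( DCG(rank(v^i), v^i) )^{-1} = ( max_{r} DCG(r, v^i) )^{-1} > 0, and define nDCG(r, v^i) := I(v^i)·DCG(r, v^i). Then for every permutation r of [p]: Σ_{i=1}^m nDCG(r, v^i) = Σ_{j=1}^p (1/log(1+j)) · ( Σ_{i=1}^m I(v^i)·v^i )_{r_j}, and consequently the permutation r* := rank( Σ_{i=1}^m I(v^i)·v^i ) satisfies Σ_{i=1}^m nDCG(r, v^i) ≤ Σ_{i=1}^m nDCG(r*, v^i) for all permutations r. -/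
open Finset

/-- nDCG centroid computation.
For nonnegative vectors `v^1,…,v^m ∈ ℝ₊^p`, each with a strictly positive
coordinate, let `I(v^i) = (DCG(rank(v^i), v^i))⁻¹ > 0` and
`nDCG(r,v^i) = I(v^i)·DCG(r,v^i)`.  Then for every permutation `r`,
`∑_i nDCG(r,v^i) = ∑_j (1/log(1+j)) · (∑_i I(v^i)·v^i)_{r_j}`, and the
permutation `rstar = rank(∑_i I(v^i)·v^i)` maximizes `∑_i nDCG(·,v^i)`.
(Positions are 0-indexed so the discount at `j : Fin p` is `1/log(j+2)`.) -/
theorem stmt_9 {m p : ℕ} (v : Fin m → Fin p → ℝ)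
    (hv : ∀ i j, 0 ≤ v i j) (hposc : ∀ i : Fin m, ∃ j : Fin p, 0 < v i j)
    (rk : Fin m → Equiv.Perm (Fin p))
    (hrk : ∀ (i : Fin m) (a b : Fin p), a ≤ b → v i (rk i b) ≤ v i (rk i a))
    (I : Fin m → ℝ)
    (hI : ∀ i : Fin m,
      I i = (∑ j : Fin p, v i (rk i j) / Real.log (((j : ℕ) : ℝ) + 2))⁻¹)
    (rstar : Equiv.Perm (Fin p))
    (hrstar : ∀ a b : Fin p, a ≤ b →
      (∑ i : Fin m, I i * v i (rstar b)) ≤ ∑ i : Fin m, I i * v i (rstar a)) :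
    (∀ i : Fin m, 0 < I i) ∧
    (∀ r : Equiv.Perm (Fin p),
        ∑ i : Fin m, I i * ∑ j : Fin p, v i (r j) / Real.log (((j : ℕ) : ℝ) + 2) =
          ∑ j : Fin p, (1 / Real.log (((j : ℕ) : ℝ) + 2)) *
            ∑ i : Fin m, I i * v i (r j)) ∧
    (∀ r : Equiv.Perm (Fin p),
        ∑ i : Fin m, I i * ∑ j : Fin p, v i (r j) / Real.log (((j : ℕ) : ℝ) + 2) ≤
          ∑ i : Fin m, I i * ∑ j : Fin p, v i (rstar j) / Real.log (((j : ℕ) : ℝ) + 2)) := by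
  have hlog : ∀ j : Fin p, (0:ℝ) < Real.log (((j:ℕ):ℝ) + 2) := by
    intro j
    apply Real.log_pos
    have := (Nat.cast_nonneg (j:ℕ) : (0:ℝ) ≤ (j:ℕ))
    linarith
  have hIpos : ∀ i, 0 < I i := by
    intro i
    rw [hI i]
    apply inv_pos.mpr
    obtain ⟨j0, hj0⟩ := hposc i
    apply Finset.sum_pos'
    · intro j _; exact div_nonneg (hv _ _) (hlog j).le
    · refine ⟨(rk i)⁻¹ j0, Finset.mem_univ _, ?_⟩
      apply div_pos _ (hlog _)
      simpa using hj0
  have heq : ∀ r : Equiv.Perm (Fin p),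
      ∑ i : Fin m, I i * ∑ j : Fin p, v i (r j) / Real.log (((j : ℕ) : ℝ) + 2) =
        ∑ j : Fin p, (1 / Real.log (((j : ℕ) : ℝ) + 2)) *
          ∑ i : Fin m, I i * v i (r j) := by
    intro r
    simp_rw [Finset.mul_sum]
    rw [Finset.sum_comm]
    refine Finset.sum_congr rfl fun j _ => Finset.sum_congr rfl fun i _ => ?_
    ring
  refine ⟨hIpos, heq, ?_⟩
  intro r
  rw [heq r, heq rstar]
  set w : Fin p → ℝ := fun j => ∑ i, I i * v i j with hw
  set c : Fin p → ℝ := fun j => 1 / Real.log (((j:ℕ):ℝ) + 2) with hc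
  have hmono : Monovary (fun j => w (rstar j)) c := by
    intro i j hij
    have hji : j ≤ i := by
      by_contra h
      push_neg at h
      have hcle : c j ≤ c i := by
        apply one_div_le_one_div_of_le (hlog i)
        apply Real.log_le_log (by positivity)
        have : ((i:ℕ):ℝ) ≤ ((j:ℕ):ℝ) := by exact_mod_cast Fin.le_iff_val_le_val.mp h.le
        linarith
      exact absurd hij (not_lt.mpr hcle)
    exact hrstar j i hji
  have key := hmono.sum_comp_perm_smul_le_sum_smul (σ := rstar⁻¹ * r)
  simp only [smul_eq_mul, Equiv.Perm.mul_apply, Equiv.Perm.inv_def, Equiv.apply_symm_apply] at key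
  calc ∑ j, c j * w (r j) = ∑ j, w (rstar ((rstar⁻¹ * r) j)) * c j := by
        refine Finset.sum_congr rfl fun j _ => ?_
        simp [mul_comm]
    _ ≤ ∑ j, w (rstar j) * c j := hmono.sum_comp_perm_smul_le_sum_smul (σ := rstar⁻¹ * r)
    _ = ∑ j, c j * w (rstar j) := by
        refine Finset.sum_congr rfl fun j _ => mul_comm _ _
end

section
/- Let X = [x^1,…,x^n] ∈ ℝ^{d×n}, let 𝓕 = {F_1,…,F_K} be a K-partition of [d] with d_k := |F_k|, and for each k let P_k ∈ ℝ^{d_k×n} be the submatrix of rows of X indexed by F_k. Let w ∈ ℝ^d and w̃ ∈ ℝ^K, and suppose that for each k ∈ [K] there is ε_k ≥ 0 with ‖P_k^⊤(w_{F_k} − w̃_k·1_{d_k})‖_2 ≤ ε_k. Then Σ_{i=1}^n ( w^⊤x^i − w̃^⊤x̃^i )² ≤ ( Σ_{k=1}^K ε_k )². -/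
open Finset

/-- If for each cluster `F_k` of a `K`-partition of `[d]`
we have `‖P_k^⊤(w_{F_k} - wt_k·1_{d_k})‖₂ ≤ ε_k` with `ε_k ≥ 0`, then
`∑_{i=1}^n (w^⊤x^i - wt^⊤x̃^i)² ≤ (∑_k ε_k)²`. -/
theorem stmt_11 {d n K : ℕ}
    (X : Matrix (Fin d) (Fin n) ℝ)
    (F : Fin K → Finset (Fin d))
    (hdisj : ∀ k l : Fin K, k ≠ l → Disjoint (F k) (F l))
    (hcover : ∀ j : Fin d, ∃ k : Fin K, j ∈ F k)
    (w : Fin d → ℝ) (wt : Fin K → ℝ)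
    (ε : Fin K → ℝ) (hε : ∀ k, 0 ≤ ε k)
    (hbound : ∀ k : Fin K,
      Real.sqrt (∑ i : Fin n, (∑ j ∈ F k, (w j - wt k) * X j i) ^ 2) ≤ ε k) :
    ∑ i : Fin n,
        ((∑ j : Fin d, w j * X j i) - ∑ k : Fin K, wt k * ∑ j ∈ F k, X j i) ^ 2 ≤
      (∑ k : Fin K, ε k) ^ 2 := by
  set v : Fin K → EuclideanSpace ℝ (Fin n) :=
    fun k => WithLp.toLp 2 (fun i => ∑ j ∈ F k, (w j - wt k) * X j i) with hv
  have hnorm : ∀ k, ‖v k‖ ≤ ε k := by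
    intro k
    rw [EuclideanSpace.norm_eq]
    simpa [hv] using hbound k
  have huniv : (Finset.univ : Finset (Fin d)) = Finset.univ.biUnion F := by
    ext j
    simp only [Finset.mem_biUnion, Finset.mem_univ, true_iff, true_and]
    exact hcover j
  have hsplit : ∀ (g : Fin d → ℝ), ∑ j : Fin d, g j = ∑ k : Fin K, ∑ j ∈ F k, g j := by
    intro g
    rw [huniv, Finset.sum_biUnion]
    intro a _ b _ hab
    exact hdisj a b hab
  have hpt : ∀ i, ((∑ j : Fin d, w j * X j i) - ∑ k : Fin K, wt k * ∑ j ∈ F k, X j i)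
      = (∑ k : Fin K, v k) i := by
    intro i
    have : (∑ k : Fin K, v k) i = ∑ k : Fin K, v k i :=
      by rw [WithLp.ofLp_sum]; exact Finset.sum_apply i Finset.univ (fun k => (v k).ofLp)
    rw [this, hsplit (fun j => w j * X j i)]
    rw [← Finset.sum_sub_distrib]
    refine Finset.sum_congr rfl fun k _ => ?_
    simp [hv, Finset.mul_sum, Finset.sum_sub_distrib, sub_mul]
  have hLHS : ∑ i : Fin n,
        ((∑ j : Fin d, w j * X j i) - ∑ k : Fin K, wt k * ∑ j ∈ F k, X j i) ^ 2
      = ‖∑ k : Fin K, v k‖ ^ 2 := by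
    rw [EuclideanSpace.norm_eq, Real.sq_sqrt (by positivity)]
    exact Finset.sum_congr rfl fun i _ => by rw [hpt i, Real.norm_eq_abs, sq_abs]
  rw [hLHS]
  have h1 : ‖∑ k : Fin K, v k‖ ≤ ∑ k : Fin K, ε k :=
    (norm_sum_le _ _).trans (Finset.sum_le_sum fun k _ => hnorm k)
  exact pow_le_pow_left₀ (norm_nonneg _) h1 2
end

section
/- Let X = [x^1,…,x^n] ∈ ℝ^{d×n} and Y = [y^1,…,y^n] ∈ {0,1}^{L×n}; for l ∈ [L] let z^l := Σ_{i=1}^n y^i_l x^i ∈ ℝ^d and z̃^l := Σ_{i=1}^n y^i_l x̃^i ∈ ℝ^K. Let 𝓕 = {F_1,…,F_K} be a K-partition of [d], for each k let Q_k ∈ ℝ^{d_k×L} be the matrix whose rows are q^j := Σ_{i=1}^n x^i_j y^i for j ∈ F_k. Let δ ∈ ℝ^d and δ̃ ∈ ℝ^K, and suppose for each k there is ε_k ≥ 0 with ‖Q_k^⊤(δ_{F_k} − δ̃_k·1_{d_k})‖_2 ≤ ε_k. Then Σ_{l=1}^L ( δ^⊤z^l − δ̃^⊤z̃^l )² ≤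 ( Σ_{k=1}^K ε_k )². -/
open Finset

/-- With `z^l = ∑_i y^i_l x^i ∈ ℝ^d`,
`z̃^l = ∑_i y^i_l x̃^i ∈ ℝ^K`, and `Q_k` the matrix with rows
`q^j = ∑_i x^i_j y^i` for `j ∈ F_k`: if for each `k` we have
`‖Q_k^⊤(δ_{F_k} - δt_k·1_{d_k})‖₂ ≤ ε_k` with `ε_k ≥ 0`, then
`∑_{l=1}^L (δ^⊤z^l - δt^⊤z̃^l)² ≤ (∑_k ε_k)²`. -/
theorem stmt_13 {d n L K : ℕ}
    (X : Matrix (Fin d) (Fin n) ℝ)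
    (Y : Matrix (Fin L) (Fin n) ℝ)
    (hY : ∀ (l : Fin L) (i : Fin n), Y l i = 0 ∨ Y l i = 1)
    (F : Fin K → Finset (Fin d))
    (hdisj : ∀ k l : Fin K, k ≠ l → Disjoint (F k) (F l))
    (hcover : ∀ j : Fin d, ∃ k : Fin K, j ∈ F k)
    (δ : Fin d → ℝ) (δt : Fin K → ℝ)
    (ε : Fin K → ℝ) (hε : ∀ k, 0 ≤ ε k)
    (hbound : ∀ k : Fin K,
      Real.sqrt (∑ l : Fin L,
        (∑ j ∈ F k, (δ j - δt k) * (∑ i : Fin n, X j i * Y l i)) ^ 2) ≤ ε k) :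
    ∑ l : Fin L,
        ((∑ j : Fin d, δ j * (∑ i : Fin n, Y l i * X j i)) -
          ∑ k : Fin K, δt k * (∑ i : Fin n, Y l i * ∑ j ∈ F k, X j i)) ^ 2 ≤
      (∑ k : Fin K, ε k) ^ 2 := by
  classical
  -- partition of the universe
  have huniv : (univ : Finset (Fin d)) = univ.biUnion F := by
    ext j
    simp only [mem_univ, mem_biUnion, true_iff]
    obtain ⟨k, hk⟩ := hcover j
    exact ⟨k, trivial, hk⟩
  have hd : ∀ s : Finset (Fin K), ((s : Set (Fin K)).PairwiseDisjoint F) := by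
    intro s k _ l _ hkl
    exact hdisj k l hkl
  -- the block vectors
  set g : Fin K → EuclideanSpace ℝ (Fin L) := fun k =>
    WithLp.toLp 2 (fun l => ∑ j ∈ F k, (δ j - δt k) * (∑ i : Fin n, X j i * Y l i)) with hg
  -- key rewriting of the summand
  have key : ∀ l : Fin L,
      ((∑ j : Fin d, δ j * (∑ i : Fin n, Y l i * X j i)) -
        ∑ k : Fin K, δt k * (∑ i : Fin n, Y l i * ∑ j ∈ F k, X j i))
      = ∑ k : Fin K, g k l := by
    intro l
    have h1 : (∑ j : Fin d, δ j * (∑ i : Fin n, Y l i * X j i))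
        = ∑ k : Fin K, ∑ j ∈ F k, δ j * (∑ i : Fin n, Y l i * X j i) := by
      rw [show (∑ j : Fin d, δ j * (∑ i : Fin n, Y l i * X j i))
          = ∑ j ∈ (univ : Finset (Fin d)), δ j * (∑ i : Fin n, Y l i * X j i) from rfl,
        huniv, Finset.sum_biUnion (hd univ)]
    rw [h1, ← Finset.sum_sub_distrib]
    refine Finset.sum_congr rfl fun k _ => ?_
    have h2 : δt k * (∑ i : Fin n, Y l i * ∑ j ∈ F k, X j i)
        = ∑ j ∈ F k, δt k * (∑ i : Fin n, Y l i * X j i) := by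
      simp_rw [Finset.mul_sum]
      rw [Finset.sum_comm]
    rw [h2, ← Finset.sum_sub_distrib]
    refine Finset.sum_congr rfl fun j _ => ?_
    rw [← sub_mul]
    congr 1
    exact Finset.sum_congr rfl fun i _ => mul_comm _ _
  -- norms of the block vectors
  have hnorm : ∀ k, ‖g k‖ ≤ ε k := by
    intro k
    have := hbound k
    rwa [show Real.sqrt (∑ l : Fin L,
        (∑ j ∈ F k, (δ j - δt k) * (∑ i : Fin n, X j i * Y l i)) ^ 2) = ‖g k‖ by
      rw [EuclideanSpace.norm_eq]
      congr 1
      refine Finset.sum_congr rfl fun l _ => ?_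
      rw [Real.norm_eq_abs, sq_abs]] at this
  have htri : ‖∑ k : Fin K, g k‖ ≤ ∑ k : Fin K, ε k :=
    le_trans (norm_sum_le _ _) (Finset.sum_le_sum fun k _ => hnorm k)
  have hfinal : ∑ l : Fin L, (∑ k : Fin K, g k l) ^ 2 ≤ (∑ k : Fin K, ε k) ^ 2 := by
    have h1 : ∑ l : Fin L, (∑ k : Fin K, g k l) ^ 2 = ‖∑ k : Fin K, g k‖ ^ 2 := by
      rw [EuclideanSpace.norm_eq, Real.sq_sqrt (by positivity)]
      refine Finset.sum_congr rfl fun l _ => ?_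
      have : (∑ k : Fin K, g k) l = ∑ k : Fin K, g k l := by
        rw [WithLp.ofLp_sum]; exact Finset.sum_apply _ _ _
      rw [this, Real.norm_eq_abs, sq_abs]
    rw [h1]
    exact pow_le_pow_left₀ (norm_nonneg _) htri 2
  calc ∑ l : Fin L,
        ((∑ j : Fin d, δ j * (∑ i : Fin n, Y l i * X j i)) -
          ∑ k : Fin K, δt k * (∑ i : Fin n, Y l i * ∑ j ∈ F k, X j i)) ^ 2
      = ∑ l : Fin L, (∑ k : Fin K, g k l) ^ 2 :=
        Finset.sum_congr rfl fun l _ => by rw [key l]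
    _ ≤ (∑ k : Fin K, ε k) ^ 2 := hfinal
end

section
/- Let X = [x^1,…,x^n] ∈ ℝ^{d×n}, let 𝓕 = {F_1,…,F_K} be a K-partition of [d], and for each k let P_k ∈ ℝ^{d_k×n} be the submatrix of rows of X indexed by F_k and let μ^k ∈ ℝ^n. Define err_k := sqrt( Σ_{j∈F_k} ‖p^j − μ^k‖_2² ), where p^j = (x^1_j,…,x^n_j)^⊤ ∈ ℝ^n is the j-th row of X. Then err_k = ‖P_k − 1_{d_k}(μ^k)^⊤‖_F, and for every w ∈ ℝ^d there exists c ∈ ℝ such that ‖P_k^⊤(w_{F_k} − c·1_{d_k})‖_2 ≤ err_k · ‖w_{F_k}^⊥‖_2. -/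
open Finset

/-- With `p^j` the `j`-th row of `X` and
`err_k = sqrt(∑_{j∈F_k} ‖p^j - μ^k‖₂²)`, we have
`err_k = ‖P_k - 1_{d_k}(μ^k)^⊤‖_F`, and for every `w ∈ ℝ^d` there exists
`c ∈ ℝ` with `‖P_k^⊤(w_{F_k} - c·1_{d_k})‖₂ ≤ err_k · ‖w_{F_k}^⊥‖₂`. -/
theorem stmt_14 {d n K : ℕ}
    (X : Matrix (Fin d) (Fin n) ℝ)
    (F : Fin K → Finset (Fin d))
    (hdisj : ∀ k l : Fin K, k ≠ l → Disjoint (F k) (F l))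
    (hcover : ∀ j : Fin d, ∃ k : Fin K, j ∈ F k)
    (μ : Fin K → Fin n → ℝ) (k : Fin K)
    (errk : ℝ)
    (herr : errk =
      Real.sqrt (∑ j ∈ F k, Real.sqrt (∑ i : Fin n, (X j i - μ k i) ^ 2) ^ 2)) :
    errk = Real.sqrt (∑ j ∈ F k, ∑ i : Fin n, (X j i - μ k i) ^ 2) ∧
      ∀ w : Fin d → ℝ, ∃ c : ℝ,
        Real.sqrt (∑ i : Fin n, (∑ j ∈ F k, (w j - c) * X j i) ^ 2) ≤
          errk *
            Real.sqrt (∑ j ∈ F k,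
              (w j - (∑ j' ∈ F k, w j') / ((F k).card : ℝ)) ^ 2) := by
  have hnn : ∀ j, (0:ℝ) ≤ ∑ i : Fin n, (X j i - μ k i) ^ 2 :=
    fun j => Finset.sum_nonneg fun i _ => sq_nonneg _
  have heq : errk = Real.sqrt (∑ j ∈ F k, ∑ i : Fin n, (X j i - μ k i) ^ 2) := by
    rw [herr]
    congr 1
    exact Finset.sum_congr rfl fun j _ => Real.sq_sqrt (hnn j)
  refine ⟨heq, ?_⟩
  intro w
  set c : ℝ := (∑ j' ∈ F k, w j') / ((F k).card : ℝ) with hc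
  refine ⟨c, ?_⟩
  rcases Finset.eq_empty_or_nonempty (F k) with hFk | hFk
  · simp [hFk, heq]
  · have hcard : ((F k).card : ℝ) ≠ 0 := by
      exact_mod_cast Finset.card_ne_zero.mpr hFk
    have hsum0 : ∑ j ∈ F k, (w j - c) = 0 := by
      rw [Finset.sum_sub_distrib, Finset.sum_const, nsmul_eq_mul, hc]
      field_simp
      ring
    -- rewrite inner sums
    have hrw : ∀ i : Fin n, ∑ j ∈ F k, (w j - c) * X j i
        = ∑ j ∈ F k, (w j - c) * (X j i - μ k i) := by
      intro i
      have : ∑ j ∈ F k, (w j - c) * (X j i - μ k i)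
          = (∑ j ∈ F k, (w j - c) * X j i) - (∑ j ∈ F k, (w j - c)) * μ k i := by
        rw [Finset.sum_mul, ← Finset.sum_sub_distrib]
        exact Finset.sum_congr rfl fun j _ => by ring
      rw [this, hsum0]; ring
    set A : ℝ := ∑ j ∈ F k, (w j - c) ^ 2 with hA
    have hAnn : 0 ≤ A := Finset.sum_nonneg fun j _ => sq_nonneg _
    have hCS : ∀ i : Fin n, (∑ j ∈ F k, (w j - c) * X j i) ^ 2
        ≤ A * ∑ j ∈ F k, (X j i - μ k i) ^ 2 := by
      intro i
      rw [hrw i]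
      exact Finset.sum_mul_sq_le_sq_mul_sq (F k) _ _
    calc Real.sqrt (∑ i : Fin n, (∑ j ∈ F k, (w j - c) * X j i) ^ 2)
        ≤ Real.sqrt (∑ i : Fin n, A * ∑ j ∈ F k, (X j i - μ k i) ^ 2) := by
          apply Real.sqrt_le_sqrt
          exact Finset.sum_le_sum fun i _ => hCS i
      _ = Real.sqrt ((∑ j ∈ F k, ∑ i : Fin n, (X j i - μ k i) ^ 2) * A) := by
          rw [← Finset.mul_sum, Finset.sum_comm, mul_comm]
      _ = errk * Real.sqrt A := by
          rw [Real.sqrt_mul (Finset.sum_nonneg fun j _ => hnn j), heq]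
end
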